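/- Let X be the disjoint union of countably many half-open intervals [0,1). Then for every submonoid S of ℤ there exists a bijection f : X → X such that {n ∈ ℤ | fⁿ is continuous} = S. -/

import Mathlib

namespace Stmt3

open Set Filter Topology

local notation "I01" => (Set.Ico (0:ℝ) 1)

noncomputable section

def fr (r : ℝ) : I01 := ⟨Int.fract r, ⟨Int.fract_nonneg r, Int.fract_lt_one r⟩⟩

lemma fr_coe (x : I01) : fr (x : ℝ) = x := by
  apply Subtype.ext
  exact Int.fract_eq_self.mpr x.2

lemma fract_fract_add (y z : ℝ) : Int.fract (Int.fract y + z) = Int.fract (y + z) := by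
  rw [Int.fract_eq_fract]
  refine ⟨-⌊y⌋, ?_⟩
  simp only [Int.fract]
  push_cast
  ring

def rotE (α : ℝ) : Equiv.Perm I01 where
  toFun x := fr ((x : ℝ) + α)
  invFun x := fr ((x : ℝ) - α)
  left_inv x := by
    apply Subtype.ext
    show Int.fract (Int.fract ((x:ℝ) + α) - α) = _
    rw [sub_eq_add_neg, fract_fract_add]
    simp [Int.fract_eq_self.mpr x.2]
  right_inv x := by
    apply Subtype.ext
    show Int.fract (Int.fract ((x:ℝ) - α) + α) = _
    rw [fract_fract_add]
    simp [Int.fract_eq_self.mpr x.2]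

def RotP (α : ℝ) : Equiv.Perm (ℤ × I01) := Equiv.prodCongr (Equiv.refl ℤ) (rotE α)

lemma RotP_apply (α : ℝ) (k : ℤ) (x : I01) : RotP α (k, x) = (k, rotE α x) := rfl

lemma RotP_int (α : ℝ) (h : ∃ k : ℤ, α = (k : ℝ)) : RotP α = 1 := by
  obtain ⟨k, rfl⟩ := h
  ext p
  · rfl
  · show ((rotE (k:ℝ) p.2 : I01) : ℝ) = (p.2 : ℝ)
    show Int.fract ((p.2 : ℝ) + (k:ℝ)) = _
    rw [Int.fract_add_intCast]
    exact Int.fract_eq_self.mpr p.2.2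

lemma RotP_mul (α β : ℝ) : RotP α * RotP β = RotP (α + β) := by
  ext p
  · rfl
  · show ((rotE α (rotE β p.2) : I01) : ℝ) = _
    show Int.fract (Int.fract ((p.2:ℝ) + β) + α) = Int.fract ((p.2:ℝ) + (α + β))
    rw [fract_fract_add]
    ring_nf

lemma RotP_inv (α : ℝ) : (RotP α)⁻¹ = RotP (-α) := by
  ext p
  · rfl
  · show (((rotE α).symm p.2 : I01) : ℝ) = ((rotE (-α) p.2 : I01) : ℝ)
    show Int.fract ((p.2:ℝ) - α) = Int.fract ((p.2:ℝ) + -α)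
    ring_nf

lemma RotP_pow (α : ℝ) (n : ℕ) : RotP α ^ n = RotP (n * α) := by
  induction n with
  | zero => simp ; exact (RotP_int 0 ⟨0, by simp⟩).symm
  | succ m ih =>
      rw [pow_succ, ih, RotP_mul]
      push_cast
      ring_nf

lemma RotP_zpow (α : ℝ) (n : ℤ) : RotP α ^ n = RotP (n * α) := by
  cases n with
  | ofNat m => rw [Int.ofNat_eq_coe, zpow_natCast, RotP_pow] ; norm_num
  | negSucc m =>
      rw [zpow_negSucc, RotP_pow, RotP_inv]
      push_cast
      ring_nf


lemma RotP_discont (α : ℝ) (h : ¬ ∃ k : ℤ, α = (k:ℝ)) : ¬ Continuous ⇑(RotP α) := by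
  intro hcont
  have hsl : Continuous fun x : I01 => ((rotE α x : I01) : ℝ) := by
    have h1 : Continuous fun x : I01 => ((0:ℤ), x) :=
      Continuous.prodMk continuous_const continuous_id
    have h2 : Continuous fun x : I01 => (RotP α) ((0:ℤ), x) := hcont.comp h1
    exact continuous_subtype_val.comp (continuous_snd.comp h2)
  set c := Int.fract α with hc
  have hc0 : 0 < c := by
    rcases lt_or_eq_of_le (Int.fract_nonneg α) with h' | h'
    · exact h'
    · exfalso
      apply h
      refine ⟨⌊α⌋, ?_⟩
      have h8 := Int.floor_add_fract α
      rw [← hc] at h8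
      rw [← hc] at h'
      rw [← h'] at h8
      linarith
  have hc1 : c < 1 := Int.fract_lt_one α
  set p : I01 := ⟨1 - c, ⟨by linarith, by linarith⟩⟩ with hpdef
  have hval : ∀ x : I01, (x:ℝ) < 1 - c → ((rotE α x : I01):ℝ) = (x:ℝ) + c := by
    intro x hx
    show Int.fract ((x:ℝ) + α) = (x:ℝ) + c
    have he : (x:ℝ) + α = (((x:ℝ) + c) + (⌊α⌋ : ℤ)) := by
      simp only [hc, Int.fract]
      ring
    rw [he, Int.fract_add_intCast]
    exact Int.fract_eq_self.mpr ⟨by have := x.2.1; linarith, by linarith⟩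
  have hp : ((rotE α p : I01):ℝ) = 0 := by
    show Int.fract ((1 - c) + α) = 0
    have he : (1 - c) + α = (((1 + ⌊α⌋ : ℤ) : ℤ) : ℝ) := by
      simp only [hc, Int.fract]
      push_cast
      ring
    rw [he, Int.fract_intCast]
  have humem : ∀ n : ℕ, max 0 (1 - c - 1/((n:ℝ)+1)) ∈ I01 := by
    intro n
    constructor
    · exact le_max_left _ _
    · apply max_lt (by linarith)
      have : 0 < 1/((n:ℝ)+1) := by positivity
      linarith
  set u : ℕ → I01 := fun n => ⟨max 0 (1 - c - 1/((n:ℝ)+1)), humem n⟩ with hu_def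
  have hu : Tendsto (fun n => ((u n : I01):ℝ)) atTop (𝓝 (1 - c)) := by
    have h3 : Tendsto (fun n : ℕ => 1 - c - 1/((n:ℝ)+1)) atTop (𝓝 (1 - c - 0)) :=
      tendsto_const_nhds.sub tendsto_one_div_add_atTop_nhds_zero_nat
    have h4 := (tendsto_const_nhds : Tendsto (fun _ : ℕ => (0:ℝ)) atTop (𝓝 0)).max h3
    rw [sub_zero] at h3 h4
    rw [max_eq_right (by linarith : (0:ℝ) ≤ 1 - c)] at h4
    exact h4
  have hlt : ∀ n, ((u n : I01) : ℝ) < 1 - c := by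
    intro n
    apply max_lt (by linarith)
    have : 0 < 1/((n:ℝ)+1) := by positivity
    linarith
  have huI : Tendsto u atTop (𝓝 p) := by
    rw [tendsto_subtype_rng]
    exact hu
  have T1 : Tendsto (fun n => ((rotE α (u n):I01):ℝ)) atTop (𝓝 0) := by
    have h5 := (hsl.continuousAt (x := p)).tendsto.comp huI
    simpa [hp, Function.comp_def] using h5
  have T2 : Tendsto (fun n => ((rotE α (u n):I01):ℝ)) atTop (𝓝 1) := by
    have h6 : Tendsto (fun n => ((u n:I01):ℝ) + c) atTop (𝓝 ((1-c)+c)) :=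
      hu.add tendsto_const_nhds
    have h7 : ((1:ℝ)-c)+c = 1 := by ring
    rw [h7] at h6
    exact Tendsto.congr (fun n => (hval _ (hlt n)).symm) h6
  have := tendsto_nhds_unique T1 T2
  norm_num at this

theorem rot_exists (a : ℤ) (ha : a ≠ 0) :
    ∀ n : ℤ, Continuous ⇑((RotP (1/(a:ℝ))) ^ n) ↔ (a ∣ n) := by
  have haR : (a:ℝ) ≠ 0 := Int.cast_ne_zero.mpr ha
  intro n
  rw [RotP_zpow]
  constructor
  · intro h
    by_contra hnd
    refine RotP_discont _ ?_ h
    rintro ⟨k, hk⟩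
    apply hnd
    have h1 : (n : ℝ) = (k:ℝ) * (a:ℝ) := by
      field_simp at hk
      linarith
    have h2 : (n : ℤ) = k * a := by exact_mod_cast h1
    exact ⟨k, by linarith⟩
  · rintro ⟨k, rfl⟩
    have : RotP (((a * k : ℤ):ℝ) * (1/(a:ℝ))) = 1 := by
      apply RotP_int
      refine ⟨k, ?_⟩
      push_cast
      field_simp
    rw [this]
    simp only [Equiv.Perm.coe_one]
    exact continuous_id


-- CASCADE




attribute [local instance] Classical.propDecidable


abbrev CIdx : Type := ℕ ⊕ ((Bool × ℕ) ⊕ (ℕ × ℕ))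

def M (τ : ℕ) : CIdx := Sum.inl τ
def B (b : Bool) (τ : ℕ) : CIdx := Sum.inr (Sum.inl (b, τ))
def D (l v : ℕ) : CIdx := Sum.inr (Sum.inr (l, v))

lemma M_ne_B {τ b τ'} : M τ ≠ B b τ' := by simp [M, B]
lemma M_ne_D {τ l v} : M τ ≠ D l v := by simp [M, D]
lemma B_ne_D {b τ l v} : B b τ ≠ D l v := by simp [B, D]
lemma B_inj {b τ b' τ'} : B b τ = B b' τ' ↔ b = b' ∧ τ = τ' := by simp [B]
lemma D_inj {l v l' v'} : D l v = D l' v' ↔ l = l' ∧ v = v' := by simp [D]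
lemma M_inj {τ τ'} : M τ = M τ' ↔ τ = τ' := by simp [M]

def bval (b : Bool) : ℕ := if b then 1 else 0

lemma bval_lt_two (b : Bool) : bval b < 2 := by cases b <;> simp [bval]

/-- (x + bval b)/2 -/
def half (b : Bool) (x : I01) : I01 :=
  ⟨((x:ℝ) + (bval b : ℕ))/2, by
    have h1 := x.2.1
    have h2 := x.2.2
    have h3 : (bval b : ℝ) ≤ 1 := by cases b <;> norm_num [bval]
    have h4 : (0:ℝ) ≤ (bval b : ℕ) := by positivity
    constructor
    · positivity
    · push_cast
      linarith⟩

def sideOf (x : I01) : Bool := decide ((1:ℝ)/2 ≤ (x:ℝ))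

lemma bval_side {x : I01} : ((bval (sideOf x) : ℕ) : ℝ) = if (1:ℝ)/2 ≤ (x:ℝ) then 1 else 0 := by
  by_cases h : (1:ℝ)/2 ≤ (x:ℝ) <;> simp [sideOf, bval, h]

def dbl (x : I01) : I01 :=
  ⟨2*(x:ℝ) - (bval (sideOf x) : ℕ), by
    have h1 := x.2.1
    have h2 := x.2.2
    rw [bval_side]
    by_cases h : (1:ℝ)/2 ≤ (x:ℝ)
    · rw [if_pos h]
      constructor <;> linarith
    · rw [if_neg h]
      push_neg at h
      constructor <;> [linarith; linarith]⟩

lemma dbl_coe (x : I01) : ((dbl x : I01) : ℝ) = 2*(x:ℝ) - (bval (sideOf x) : ℕ) := rfl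

lemma half_coe (b : Bool) (x : I01) : ((half b x : I01) : ℝ) = ((x:ℝ) + (bval b : ℕ))/2 := rfl

lemma side_half (b : Bool) (x : I01) : sideOf (half b x) = b := by
  have h1 := x.2.1
  have h2 := x.2.2
  cases b
  · simp only [sideOf, half_coe, bval]
    norm_num
    linarith
  · simp only [sideOf, half_coe, bval]
    norm_num
    linarith

lemma dbl_half (b : Bool) (x : I01) : dbl (half b x) = x := by
  apply Subtype.ext
  rw [dbl_coe, side_half, half_coe]
  ring

lemma half_side_dbl (x : I01) : half (sideOf x) (dbl x) = x := by
  apply Subtype.ext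
  rw [half_coe, dbl_coe]
  ring

/-- (x + v)/2^d when v < 2^d, junk otherwise -/
def aff (d v : ℕ) (x : I01) : I01 :=
  if h : v < 2^d then
    ⟨((x:ℝ) + (v:ℕ))/2^d, by
      have h1 := x.2.1
      have h2 := x.2.2
      have h3 : (v:ℝ) + 1 ≤ (2:ℝ)^d := by exact_mod_cast Nat.succ_le_of_lt h
      constructor
      · positivity
      · rw [div_lt_one (by positivity)]
        linarith⟩
  else x

lemma aff_coe {d v : ℕ} (h : v < 2^d) (x : I01) :
    ((aff d v x : I01) : ℝ) = ((x:ℝ) + (v:ℕ))/2^d := by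
  simp [aff, dif_pos h]

lemma aff_zero (x : I01) : aff 0 0 x = x := by
  apply Subtype.ext
  rw [aff_coe (by norm_num)]
  norm_num


lemma half_aff {d v : ℕ} (h : v < 2^d) (b : Bool) (x : I01) :
    half b (aff d v x) = aff (d+1) (v + bval b * 2^d) x := by
  have hb := bval_lt_two b
  have h2 : v + bval b * 2^d < 2^(d+1) := by
    have he : (2:ℕ)^(d+1) = 2^d + 2^d := by ring
    cases b <;> simp [bval] <;> omega
  apply Subtype.ext
  rw [half_coe, aff_coe h, aff_coe h2]
  have hne : ((2:ℝ)^d) ≠ 0 := by positivity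
  push_cast
  rw [pow_succ]
  field_simp
  ring

lemma side_aff {e v : ℕ} (h : v < 2^(e+1)) (x : I01) :
    sideOf (aff (e+1) v x) = decide (2^e ≤ v) := by
  have hx1 := x.2.1
  have hx2 := x.2.2
  have hpe : (0:ℝ) < 2^e := by positivity
  apply decide_eq_decide.mpr
  rw [aff_coe h]
  constructor
  · intro hle
    by_contra hc
    push_neg at hc
    have hcr : (v:ℝ) + 1 ≤ 2^e := by exact_mod_cast Nat.succ_le_of_lt hc
    rw [le_div_iff₀ (by positivity)] at hle
    have : (2:ℝ)^(e+1) = 2*2^e := by ring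
    rw [this] at hle
    linarith
  · intro hle
    have hcr : (2:ℝ)^e ≤ v := by exact_mod_cast hle
    rw [le_div_iff₀ (by positivity)]
    have : (2:ℝ)^(e+1) = 2*2^e := by ring
    rw [this]
    linarith

lemma dbl_aff {e v : ℕ} (h : v < 2^(e+1)) (x : I01) :
    dbl (aff (e+1) v x) = aff e (v % 2^e) x := by
  have hmlt : v % 2^e < 2^e := Nat.mod_lt _ (by positivity)
  apply Subtype.ext
  rw [dbl_coe, side_aff h, aff_coe h, aff_coe hmlt]
  have hpe : (0:ℝ) < 2^e := by positivity
  by_cases hc : 2^e ≤ v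
  · have hv : v % 2^e = v - 2^e := by
      have h2 : 2^(e+1) = 2^e + 2^e := by ring
      have := Nat.mod_eq_sub_mod hc
      rw [this, Nat.mod_eq_of_lt (by omega)]
    rw [decide_eq_true hc]
    norm_num [bval]
    rw [hv]
    have hvr : ((v - 2^e : ℕ) : ℝ) = (v:ℝ) - 2^e := by
      push_cast [hc]
      ring
    rw [hvr]
    push_cast
    rw [pow_succ]
    field_simp
    ring
  · have hv : v % 2^e = v := Nat.mod_eq_of_lt (by omega)
    rw [decide_eq_false hc]
    norm_num [bval]
    rw [hv]
    push_cast
    rw [pow_succ]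
    field_simp


lemma mod_two_of_lt_two {v : ℕ} (h : v < 2) : v % 2 = v := Nat.mod_eq_of_lt h

lemma decide_bval (s : Bool) : decide (bval s % 2 = 1) = s := by
  cases s <;> simp [bval]

lemma decide_bval' (s : Bool) : decide (bval s = 1) = s := by
  cases s <;> simp [bval]

lemma bval_decide_mod2 (v : ℕ) : bval (decide (v % 2 = 1)) = v % 2 := by
  rcases Nat.mod_two_eq_zero_or_one v with h | h <;> simp [h, bval]

variable (T : Set ℕ)

def fFun : CIdx × I01 → CIdx × I01
  | (Sum.inl τ, x) =>
      if τ ∈ T then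
        (if τ+1 ∈ T then (M (τ+1), x) else (B (sideOf x) (τ+1), dbl x))
      else (M τ, x)
  | (Sum.inr (Sum.inl (b, τ)), x) =>
      if τ ∈ T then (B b τ, x)
      else (if τ+1 ∈ T then (M (τ+1), half b x) else (B b (τ+1), x))
  | (Sum.inr (Sum.inr (l, v)), x) =>
      if 1 ≤ l ∧ v < 2^l then
        (if l = 1 then (M 0, half (decide (v % 2 = 1)) x)
         else (D (l-1) (v/2), half (decide (v % 2 = 1)) x))
      else (D l v, x)

def gFun : CIdx × I01 → CIdx × I01
  | (Sum.inl τ, x) =>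
      if τ = 0 then (D 1 (bval (sideOf x)), dbl x)
      else if τ ∈ T then
        (if τ - 1 ∈ T then (M (τ-1), x) else (B (sideOf x) (τ-1), dbl x))
      else (M τ, x)
  | (Sum.inr (Sum.inl (b, τ)), x) =>
      if τ ∈ T then (B b τ, x)
      else (if τ - 1 ∈ T then (M (τ-1), half b x) else (B b (τ-1), x))
  | (Sum.inr (Sum.inr (l, v)), x) =>
      if 1 ≤ l ∧ v < 2^l then (D (l+1) (2*v + bval (sideOf x)), dbl x)
      else (D l v, x)

variable {T}

lemma fFun_M (τ : ℕ) (x : I01) : fFun T (M τ, x) =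
    (if τ ∈ T then
        (if τ+1 ∈ T then (M (τ+1), x) else (B (sideOf x) (τ+1), dbl x))
      else (M τ, x)) := rfl

lemma fFun_B (b : Bool) (τ : ℕ) (x : I01) : fFun T (B b τ, x) =
    (if τ ∈ T then (B b τ, x)
      else (if τ+1 ∈ T then (M (τ+1), half b x) else (B b (τ+1), x))) := rfl

lemma fFun_D (l v : ℕ) (x : I01) : fFun T (D l v, x) =
    (if 1 ≤ l ∧ v < 2^l then
        (if l = 1 then (M 0, half (decide (v % 2 = 1)) x)
         else (D (l-1) (v/2), half (decide (v % 2 = 1)) x))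
      else (D l v, x)) := rfl

lemma gFun_M (τ : ℕ) (x : I01) : gFun T (M τ, x) =
    (if τ = 0 then (D 1 (bval (sideOf x)), dbl x)
      else if τ ∈ T then
        (if τ - 1 ∈ T then (M (τ-1), x) else (B (sideOf x) (τ-1), dbl x))
      else (M τ, x)) := rfl

lemma gFun_B (b : Bool) (τ : ℕ) (x : I01) : gFun T (B b τ, x) =
    (if τ ∈ T then (B b τ, x)
      else (if τ - 1 ∈ T then (M (τ-1), half b x) else (B b (τ-1), x))) := rfl

lemma gFun_D (l v : ℕ) (x : I01) : gFun T (D l v, x) =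
    (if 1 ≤ l ∧ v < 2^l then (D (l+1) (2*v + bval (sideOf x)), dbl x)
      else (D l v, x)) := rfl

variable (hT0 : 0 ∈ T)

include hT0

lemma casc_left_inv : Function.LeftInverse (gFun T) (fFun T) := by
  rintro ⟨(τ | (⟨b, τ⟩ | ⟨l, v⟩)), x⟩
  · -- M case
    show gFun T (fFun T (M τ, x)) = (M τ, x)
    rw [fFun_M]
    by_cases hτ : τ ∈ T
    · rw [if_pos hτ]
      by_cases hτ1 : τ + 1 ∈ T
      · rw [if_pos hτ1, gFun_M]
        rw [if_neg (by omega : ¬ τ + 1 = 0), if_pos hτ1]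
        simp only [Nat.add_sub_cancel]
        rw [if_pos hτ]
      · rw [if_neg hτ1, gFun_B]
        rw [if_neg hτ1]
        simp only [Nat.add_sub_cancel]
        rw [if_pos hτ, half_side_dbl]
    · rw [if_neg hτ, gFun_M]
      have h0 : ¬ τ = 0 := by rintro rfl; exact hτ hT0
      rw [if_neg h0, if_neg hτ]
  · -- B case
    show gFun T (fFun T (B b τ, x)) = (B b τ, x)
    rw [fFun_B]
    by_cases hτ : τ ∈ T
    · rw [if_pos hτ, gFun_B, if_pos hτ]
    · rw [if_neg hτ]
      by_cases hτ1 : τ + 1 ∈ T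
      · rw [if_pos hτ1, gFun_M]
        rw [if_neg (by omega : ¬ τ + 1 = 0), if_pos hτ1]
        simp only [Nat.add_sub_cancel]
        rw [if_neg hτ, side_half, dbl_half]
      · rw [if_neg hτ1, gFun_B, if_neg hτ1]
        simp only [Nat.add_sub_cancel]
        rw [if_neg hτ]
  · -- D case
    show gFun T (fFun T (D l v, x)) = (D l v, x)
    rw [fFun_D]
    by_cases hg : 1 ≤ l ∧ v < 2^l
    · rw [if_pos hg]
      by_cases hl : l = 1
      · rw [if_pos hl, gFun_M, if_pos rfl]
        rw [side_half, dbl_half, bval_decide_mod2]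
        subst hl
        have : v % 2 = v := mod_two_of_lt_two (by exact hg.2)
        rw [this]
      · rw [if_neg hl, gFun_D]
        have hg2 : 1 ≤ l - 1 ∧ v / 2 < 2^(l-1) := by
          constructor
          · omega
          · have h2 : 2^l = 2^(l-1) * 2 := by
              rw [← pow_succ]
              congr 1
              omega
            rw [Nat.div_lt_iff_lt_mul (by norm_num)]
            omega
        rw [if_pos hg2, side_half, dbl_half, bval_decide_mod2]
        have hll : l - 1 + 1 = l := by omega
        have hvv : 2 * (v / 2) + v % 2 = v := by omega
        rw [hll, hvv]
    · rw [if_neg hg, gFun_D, if_neg hg]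

lemma casc_right_inv : Function.RightInverse (gFun T) (fFun T) := by
  rintro ⟨(τ | (⟨b, τ⟩ | ⟨l, v⟩)), x⟩
  · show fFun T (gFun T (M τ, x)) = (M τ, x)
    rw [gFun_M]
    by_cases h0 : τ = 0
    · subst h0
      rw [if_pos rfl, fFun_D]
      have hb : bval (sideOf x) < 2 := bval_lt_two _
      rw [if_pos (by constructor <;> omega), if_pos rfl]
      have h1 : bval (sideOf x) % 2 = bval (sideOf x) := mod_two_of_lt_two hb
      rw [h1, decide_bval', half_side_dbl]
    · rw [if_neg h0]
      by_cases hτ : τ ∈ T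
      · rw [if_pos hτ]
        by_cases hτ1 : τ - 1 ∈ T
        · rw [if_pos hτ1, fFun_M, if_pos hτ1]
          have : τ - 1 + 1 = τ := by omega
          rw [this, if_pos hτ]
        · rw [if_neg hτ1, fFun_B, if_neg hτ1]
          have : τ - 1 + 1 = τ := by omega
          rw [this, if_pos hτ, half_side_dbl]
      · rw [if_neg hτ, fFun_M, if_neg hτ]
  · show fFun T (gFun T (B b τ, x)) = (B b τ, x)
    rw [gFun_B]
    by_cases hτ : τ ∈ T
    · rw [if_pos hτ, fFun_B, if_pos hτ]
    · rw [if_neg hτ]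
      have hτ0 : ¬ τ = 0 := by rintro rfl; exact hτ hT0
      by_cases hτ1 : τ - 1 ∈ T
      · rw [if_pos hτ1, fFun_M, if_pos hτ1]
        have : τ - 1 + 1 = τ := by omega
        rw [this, if_neg hτ, side_half, dbl_half]
      · rw [if_neg hτ1, fFun_B, if_neg hτ1]
        have : τ - 1 + 1 = τ := by omega
        rw [this, if_neg hτ]
  · show fFun T (gFun T (D l v, x)) = (D l v, x)
    rw [gFun_D]
    by_cases hg : 1 ≤ l ∧ v < 2^l
    · rw [if_pos hg, fFun_D]
      have hb : bval (sideOf x) < 2 := bval_lt_two _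
      have hg2 : 1 ≤ l + 1 ∧ 2*v + bval (sideOf x) < 2^(l+1) := by
        constructor
        · omega
        · have h2 : 2^(l+1) = 2^l * 2 := by rw [pow_succ]
          omega
      rw [if_pos hg2, if_neg (by omega : ¬ l + 1 = 1)]
      have h3 : (2*v + bval (sideOf x)) % 2 = bval (sideOf x) := by omega
      have h4 : (2*v + bval (sideOf x)) / 2 = v := by omega
      rw [h3, h4, decide_bval', half_side_dbl]
      simp only [Nat.add_sub_cancel]
    · rw [if_neg hg, fFun_D, if_neg hg]

def PW : Equiv.Perm (CIdx × I01) :=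
  ⟨fFun T, gFun T, casc_left_inv hT0, casc_right_inv hT0⟩

omit hT0

variable (T)


lemma bval_decide_le {c v : ℕ} (hc : 0 < c) (h : v < 2*c) :
    bval (decide (c ≤ v)) * c + v % c = v := by
  by_cases hle : c ≤ v
  · rw [decide_eq_true hle]
    have hlt : v - c < c := by omega
    have h2 : v % c = v - c := by rw [Nat.mod_eq_sub_mod hle, Nat.mod_eq_of_lt hlt]
    norm_num [bval]
    omega
  · rw [decide_eq_false hle]
    simp only [bval]
    rw [Nat.mod_eq_of_lt (by omega)]
    norm_num

def NF (n : ℕ) : CIdx × I01 → CIdx × I01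
  | (Sum.inl τ, x) =>
      if τ ∈ T then
        (if τ + n ∈ T then (M (τ+n), x) else (B (sideOf x) (τ+n), dbl x))
      else (M τ, x)
  | (Sum.inr (Sum.inl (b, τ)), x) =>
      if τ ∈ T then (B b τ, x)
      else (if τ + n ∈ T then (M (τ+n), half b x) else (B b (τ+n), x))
  | (Sum.inr (Sum.inr (l, v)), x) =>
      if 1 ≤ l ∧ v < 2^l then
        (if n < l then (D (l-n) (v / 2^n), aff n (v % 2^n) x)
         else (if n - l ∈ T then (M (n-l), aff l v x)
               else (B (decide (2^(l-1) ≤ v)) (n-l), aff (l-1) (v % 2^(l-1)) x)))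
      else (D l v, x)

lemma NF_M (n τ : ℕ) (x : I01) : NF T n (M τ, x) =
    (if τ ∈ T then
        (if τ + n ∈ T then (M (τ+n), x) else (B (sideOf x) (τ+n), dbl x))
      else (M τ, x)) := rfl

lemma NF_B (n : ℕ) (b : Bool) (τ : ℕ) (x : I01) : NF T n (B b τ, x) =
    (if τ ∈ T then (B b τ, x)
      else (if τ + n ∈ T then (M (τ+n), half b x) else (B b (τ+n), x))) := rfl

lemma NF_D (n l v : ℕ) (x : I01) : NF T n (D l v, x) =
    (if 1 ≤ l ∧ v < 2^l then
        (if n < l then (D (l-n) (v / 2^n), aff n (v % 2^n) x)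
         else (if n - l ∈ T then (M (n-l), aff l v x)
               else (B (decide (2^(l-1) ≤ v)) (n-l), aff (l-1) (v % 2^(l-1)) x)))
      else (D l v, x)) := rfl

lemma NF_zero (p : CIdx × I01) : NF T 0 p = p := by
  obtain ⟨(τ | (⟨b, τ⟩ | ⟨l, v⟩)), x⟩ := p
  · rw [show (Sum.inl τ, x) = ((M τ : CIdx), x) from rfl, NF_M]
    by_cases hτ : τ ∈ T
    · rw [if_pos hτ, Nat.add_zero, if_pos hτ]
    · rw [if_neg hτ]
  · rw [show ((Sum.inr (Sum.inl (b,τ)) : CIdx), x) = ((B b τ : CIdx), x) from rfl, NF_B]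
    by_cases hτ : τ ∈ T
    · rw [if_pos hτ]
    · rw [if_neg hτ, Nat.add_zero, if_neg hτ]
  · rw [show ((Sum.inr (Sum.inr (l,v)) : CIdx), x) = ((D l v : CIdx), x) from rfl, NF_D]
    by_cases hg : 1 ≤ l ∧ v < 2^l
    · rw [if_pos hg, if_pos (by omega : 0 < l)]
      rw [pow_zero, Nat.div_one, Nat.mod_one, aff_zero, Nat.sub_zero]
    · rw [if_neg hg]

include hT0 in
lemma NF_succ (n : ℕ) (p : CIdx × I01) :
    fFun T (NF T n p) = NF T (n+1) p := by
  obtain ⟨(τ | (⟨b, τ⟩ | ⟨l, v⟩)), x⟩ := p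
  · -- M case
    rw [show (Sum.inl τ, x) = ((M τ : CIdx), x) from rfl, NF_M, NF_M]
    by_cases hτ : τ ∈ T
    · rw [if_pos hτ, if_pos hτ]
      by_cases h1 : τ + n ∈ T
      · rw [if_pos h1, fFun_M, if_pos h1, ← Nat.add_assoc]
      · rw [if_neg h1, fFun_B, if_neg h1, ← Nat.add_assoc]
        by_cases h2 : τ + n + 1 ∈ T
        · rw [if_pos h2, if_pos h2, half_side_dbl]
        · rw [if_neg h2, if_neg h2]
    · rw [if_neg hτ, if_neg hτ, fFun_M, if_neg hτ]
  · -- B case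
    rw [show ((Sum.inr (Sum.inl (b,τ)) : CIdx), x) = ((B b τ : CIdx), x) from rfl, NF_B, NF_B]
    by_cases hτ : τ ∈ T
    · rw [if_pos hτ, if_pos hτ, fFun_B, if_pos hτ]
    · rw [if_neg hτ, if_neg hτ]
      by_cases h1 : τ + n ∈ T
      · rw [if_pos h1, fFun_M, if_pos h1, ← Nat.add_assoc]
        by_cases h2 : τ + n + 1 ∈ T
        · rw [if_pos h2, if_pos h2]
        · rw [if_neg h2, if_neg h2, side_half, dbl_half]
      · rw [if_neg h1, fFun_B, if_neg h1, ← Nat.add_assoc]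
  · -- D case
    rw [show ((Sum.inr (Sum.inr (l,v)) : CIdx), x) = ((D l v : CIdx), x) from rfl, NF_D, NF_D]
    by_cases hg : 1 ≤ l ∧ v < 2^l
    · rw [if_pos hg, if_pos hg]
      obtain ⟨hl1, hvl⟩ := hg
      have hpow : ∀ m : ℕ, v % 2^m < 2^m := fun m => Nat.mod_lt _ (by positivity)
      by_cases hn : n < l
      · rw [if_pos hn]
        have hdiv : v / 2^n < 2^(l-n) := by
          rw [Nat.div_lt_iff_lt_mul (by positivity)]
          calc v < 2^l := hvl
          _ = 2^(l-n) * 2^n := by rw [← pow_add]; congr 1; omega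
        by_cases hn1 : n + 1 < l
        · rw [if_pos hn1, fFun_D]
          rw [if_pos (by constructor <;> [omega; exact hdiv])]
          rw [if_neg (by omega : ¬ l - n = 1)]
          have e1 : l - n - 1 = l - (n+1) := by omega
          have e2 : v / 2^n / 2 = v / 2^(n+1) := by
            rw [Nat.div_div_eq_div_mul, ← pow_succ]
          have e3 : half (decide (v / 2^n % 2 = 1)) (aff n (v % 2^n) x)
              = aff (n+1) (v % 2^(n+1)) x := by
            rw [half_aff (hpow n), bval_decide_mod2]
            congr 1
            rw [Nat.mod_pow_succ]
            ring
          rw [e1, e2, e3]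
        · -- n + 1 = l
          have he : l - n = 1 := by omega
          rw [if_neg hn1, fFun_D]
          rw [if_pos (by constructor <;> [omega; exact hdiv])]
          rw [if_pos he]
          have e0 : n + 1 - l = 0 := by omega
          rw [e0, if_pos hT0]
          have e3 : half (decide (v / 2^n % 2 = 1)) (aff n (v % 2^n) x)
              = aff (n+1) (v % 2^(n+1)) x := by
            rw [half_aff (hpow n), bval_decide_mod2]
            congr 1
            rw [Nat.mod_pow_succ]
            ring
          rw [e3]
          have e4 : n + 1 = l := by omega
          rw [e4, Nat.mod_eq_of_lt hvl]
      · rw [if_neg hn, if_neg (by omega : ¬ n + 1 < l)]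
        by_cases hτ : n - l ∈ T
        · rw [if_pos hτ, fFun_M, if_pos hτ]
          have e5 : n - l + 1 = n + 1 - l := by omega
          rw [e5]
          by_cases h2 : n + 1 - l ∈ T
          · rw [if_pos h2, if_pos h2]
          · rw [if_neg h2, if_neg h2]
            obtain ⟨e, he⟩ : ∃ e, l = e + 1 := ⟨l - 1, by omega⟩
            subst he
            rw [side_aff hvl, dbl_aff hvl]
            simp only [Nat.add_sub_cancel]
        · rw [if_neg hτ, fFun_B, if_neg hτ]
          have e5 : n - l + 1 = n + 1 - l := by omega
          by_cases h2 : n + 1 - l ∈ T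
          · rw [if_pos (by rw [e5]; exact h2), e5, if_pos h2]
            congr 1
            obtain ⟨e, he⟩ : ∃ e, l = e + 1 := ⟨l - 1, by omega⟩
            subst he
            simp only [Nat.add_sub_cancel]
            rw [half_aff (hpow e)]
            congr 1
            have hv2 : v < 2 * 2^e := by
              have hpe : (2:ℕ)^(e+1) = 2*2^e := by ring
              omega
            have := bval_decide_le (by positivity : 0 < 2^e) hv2
            omega
          · rw [if_neg (by rw [e5]; exact h2), e5, if_neg h2]
    · rw [if_neg hg, if_neg hg, fFun_D, if_neg hg]


/-- continuity criterion for maps out of a product with discrete first factor -/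
lemma continuous_of_slices {A : Type*} [TopologicalSpace A] [DiscreteTopology A]
    {Y Z : Type*} [TopologicalSpace Y] [TopologicalSpace Z]
    {F : A × Y → Z} (h : ∀ a, Continuous fun y => F (a, y)) : Continuous F := by
  rw [continuous_iff_continuousAt]
  rintro ⟨a, y⟩
  unfold ContinuousAt
  rw [nhds_prod_eq, nhds_discrete, Filter.pure_prod]
  rw [Filter.tendsto_map'_iff]
  exact (h a).continuousAt

instance : PreconnectedSpace I01 := Subtype.preconnectedSpace isPreconnected_Ico

lemma discrete_constant {Z : Type*} [TopologicalSpace Z] [DiscreteTopology Z]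
    {f : I01 → Z} (hf : Continuous f) (a b : I01) : f a = f b :=
  IsPreconnected.constant PreconnectedSpace.isPreconnected_univ hf.continuousOn
    (Set.mem_univ a) (Set.mem_univ b)

lemma continuous_half (b : Bool) : Continuous (half b) := by
  apply Continuous.subtype_mk
  exact (continuous_subtype_val.add continuous_const).div_const 2

lemma continuous_aff (d v : ℕ) : Continuous (aff d v) := by
  unfold aff
  by_cases h : v < 2^d
  · simp only [dif_pos h]
    apply Continuous.subtype_mk
    exact (continuous_subtype_val.add continuous_const).div_const _
  · simp only [dif_neg h]
    exact continuous_id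

include hT0 in
lemma PW_pow_apply (n : ℕ) (p : CIdx × I01) : ((PW hT0)^n) p = NF T n p := by
  induction n with
  | zero =>
      rw [pow_zero, NF_zero]
      rfl
  | succ m ih =>
      rw [pow_succ']
      rw [Equiv.Perm.mul_apply, ih]
      exact NF_succ T hT0 m p

variable (hTadd : ∀ a ∈ T, ∀ b ∈ T, a + b ∈ T)

include hTadd in
lemma cascade_cont (n : ℕ) (hn : n ∈ T) : Continuous (NF T n) := by
  apply continuous_of_slices
  intro a
  obtain (τ | (⟨b, τ⟩ | ⟨l, v⟩)) := a
  · by_cases hτ : τ ∈ T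
    · have hτn : τ + n ∈ T := hTadd τ hτ n hn
      have hrw : (fun x : I01 => NF T n (Sum.inl τ, x))
          = fun x => ((M (τ+n) : CIdx), x) := by
        funext x
        show NF T n (M τ, x) = _
        rw [NF_M, if_pos hτ, if_pos hτn]
      rw [hrw]
      exact Continuous.prodMk continuous_const continuous_id
    · have hrw : (fun x : I01 => NF T n (Sum.inl τ, x))
          = fun x => ((M τ : CIdx), x) := by
        funext x
        show NF T n (M τ, x) = _
        rw [NF_M, if_neg hτ]
      rw [hrw]
      exact Continuous.prodMk continuous_const continuous_id
  · by_cases hτ : τ ∈ T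
    · have hrw : (fun x : I01 => NF T n (Sum.inr (Sum.inl (b, τ)), x))
          = fun x => ((B b τ : CIdx), x) := by
        funext x
        show NF T n (B b τ, x) = _
        rw [NF_B, if_pos hτ]
      rw [hrw]
      exact Continuous.prodMk continuous_const continuous_id
    · by_cases hτn : τ + n ∈ T
      · have hrw : (fun x : I01 => NF T n (Sum.inr (Sum.inl (b, τ)), x))
            = fun x => ((M (τ+n) : CIdx), half b x) := by
          funext x
          show NF T n (B b τ, x) = _
          rw [NF_B, if_neg hτ, if_pos hτn]
        rw [hrw]
        exact Continuous.prodMk continuous_const (continuous_half b)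
      · have hrw : (fun x : I01 => NF T n (Sum.inr (Sum.inl (b, τ)), x))
            = fun x => ((B b (τ+n) : CIdx), x) := by
          funext x
          show NF T n (B b τ, x) = _
          rw [NF_B, if_neg hτ, if_neg hτn]
        rw [hrw]
        exact Continuous.prodMk continuous_const continuous_id
  · by_cases hg : 1 ≤ l ∧ v < 2^l
    · by_cases hnl : n < l
      · have hrw : (fun x : I01 => NF T n (Sum.inr (Sum.inr (l, v)), x))
            = fun x => ((D (l-n) (v / 2^n) : CIdx), aff n (v % 2^n) x) := by
          funext x
          show NF T n (D l v, x) = _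
          rw [NF_D, if_pos hg, if_pos hnl]
        rw [hrw]
        exact Continuous.prodMk continuous_const (continuous_aff _ _)
      · by_cases hτ : n - l ∈ T
        · have hrw : (fun x : I01 => NF T n (Sum.inr (Sum.inr (l, v)), x))
              = fun x => ((M (n-l) : CIdx), aff l v x) := by
            funext x
            show NF T n (D l v, x) = _
            rw [NF_D, if_pos hg, if_neg hnl, if_pos hτ]
          rw [hrw]
          exact Continuous.prodMk continuous_const (continuous_aff _ _)
        · have hrw : (fun x : I01 => NF T n (Sum.inr (Sum.inr (l, v)), x))
              = fun x => ((B (decide (2^(l-1) ≤ v)) (n-l) : CIdx), aff (l-1) (v % 2^(l-1)) x) := by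
            funext x
            show NF T n (D l v, x) = _
            rw [NF_D, if_pos hg, if_neg hnl, if_neg hτ]
          rw [hrw]
          exact Continuous.prodMk continuous_const (continuous_aff _ _)
    · have hrw : (fun x : I01 => NF T n (Sum.inr (Sum.inr (l, v)), x))
          = fun x => ((D l v : CIdx), x) := by
        funext x
        show NF T n (D l v, x) = _
        rw [NF_D, if_neg hg]
      rw [hrw]
      exact Continuous.prodMk continuous_const continuous_id

include hT0 in
lemma cascade_discont_pos (n : ℕ) (hn : n ∉ T) : ¬ Continuous (NF T n) := by
  intro h
  have h2 : Continuous fun x : I01 => (NF T n ((M 0 : CIdx), x)).1 :=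
    continuous_fst.comp (h.comp (Continuous.prodMk continuous_const continuous_id))
  have hval : ∀ x : I01, (NF T n ((M 0 : CIdx), x)).1 = B (sideOf x) n := by
    intro x
    rw [NF_M, if_pos hT0, Nat.zero_add, if_neg hn]
  have hkey := discrete_constant h2 ⟨(1:ℝ)/4, by norm_num⟩ ⟨(1:ℝ)/2, by norm_num⟩
  rw [hval, hval] at hkey
  have hs1 : sideOf (⟨(1:ℝ)/4, by norm_num⟩ : I01) = false := by
    simp only [sideOf]
    norm_num
  have hs2 : sideOf (⟨(1:ℝ)/2, by norm_num⟩ : I01) = true := by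
    simp only [sideOf]
    norm_num
  rw [hs1, hs2] at hkey
  rw [B_inj] at hkey
  simp at hkey

include hT0 in
lemma cascade_discont_neg (m : ℕ) : ¬ Continuous ⇑(((PW hT0)^(m+1))⁻¹) := by
  intro h
  set σ := (PW hT0)^(m+1) with hσ
  have h2 : Continuous fun x : I01 => ((σ⁻¹) ((M 0 : CIdx), x)).1 :=
    continuous_fst.comp (h.comp (Continuous.prodMk continuous_const continuous_id))
  have hval : ∀ v : ℕ, v < 2^(m+1) → (σ⁻¹) ((M 0 : CIdx), aff (m+1) v ⟨0, by norm_num⟩)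
      = ((D (m+1) v : CIdx), ⟨0, by norm_num⟩) := by
    intro v hv
    have hfwd : σ ((D (m+1) v : CIdx), (⟨0, by norm_num⟩ : I01))
        = ((M 0 : CIdx), aff (m+1) v ⟨0, by norm_num⟩) := by
      rw [hσ, PW_pow_apply T hT0, NF_D, if_pos ⟨by omega, hv⟩,
        if_neg (by omega : ¬ m + 1 < m + 1)]
      rw [Nat.sub_self, if_pos hT0]
    rw [Equiv.Perm.inv_def, ← hfwd, Equiv.symm_apply_apply]
  have h0 : (0:ℕ) < 2^(m+1) := by positivity
  have h1 : (1:ℕ) < 2^(m+1) := by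
    have : (2:ℕ)^1 ≤ 2^(m+1) := Nat.pow_le_pow_right (by norm_num) (by omega)
    omega
  have hkey := discrete_constant h2 (aff (m+1) 0 ⟨0, by norm_num⟩) (aff (m+1) 1 ⟨0, by norm_num⟩)
  rw [hval 0 h0, hval 1 h1] at hkey
  rw [D_inj] at hkey
  omega


include hT0 hTadd in
theorem cascade_char (n : ℤ) :
    Continuous ⇑((PW hT0) ^ n) ↔ (0 ≤ n ∧ n.toNat ∈ T) := by
  cases n with
  | ofNat m =>
      rw [Int.ofNat_eq_coe, zpow_natCast]
      have hfun : ⇑((PW hT0)^m) = NF T m := funext (PW_pow_apply T hT0 m)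
      rw [hfun]
      constructor
      · intro h
        refine ⟨by positivity, ?_⟩
        simp only [Int.toNat_natCast]
        by_contra hm
        exact cascade_discont_pos T hT0 m hm h
      · rintro ⟨-, hm⟩
        simp only [Int.toNat_natCast] at hm
        exact cascade_cont T hTadd m hm
  | negSucc m =>
      constructor
      · intro h
        exfalso
        rw [zpow_negSucc] at h
        exact cascade_discont_neg T hT0 m h
      · rintro ⟨h0, -⟩
        exact absurd h0 (by simp [Int.negSucc_lt_zero])

def cidxEquiv : CIdx ≃ ℤ :=
  letI : Denumerable CIdx := Denumerable.ofEncodableOfInfinite _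
  (Denumerable.eqv CIdx).trans Equiv.intEquivNat.symm

def XCequiv : (CIdx × I01) ≃ (ℤ × I01) := Equiv.prodCongr cidxEquiv (Equiv.refl _)

lemma continuous_XCequiv : Continuous XCequiv :=
  continuous_of_slices (fun _ => Continuous.prodMk continuous_const continuous_id)

lemma continuous_XCequiv_symm : Continuous ⇑XCequiv.symm :=
  continuous_of_slices (fun _ => Continuous.prodMk continuous_const continuous_id)

def transferHom : Equiv.Perm (CIdx × I01) →* Equiv.Perm (ℤ × I01) where
  toFun σ := (XCequiv.symm.trans σ).trans XCequiv
  map_one' := Equiv.ext fun p => by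
    simp [Equiv.trans_apply]
  map_mul' f g := Equiv.ext fun p => by
    simp [Equiv.trans_apply, Equiv.Perm.mul_apply]

lemma transferHom_coe (σ : Equiv.Perm (CIdx × I01)) :
    ⇑(transferHom σ) = ⇑XCequiv ∘ ⇑σ ∘ ⇑XCequiv.symm := rfl

lemma transfer_cont (σ : Equiv.Perm (CIdx × I01)) :
    Continuous ⇑(transferHom σ) ↔ Continuous ⇑σ := by
  constructor
  · intro h
    have : ⇑σ = ⇑XCequiv.symm ∘ ⇑(transferHom σ) ∘ ⇑XCequiv := by
      rw [transferHom_coe]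
      funext p
      simp
    rw [this]
    exact continuous_XCequiv_symm.comp (h.comp continuous_XCequiv)
  · intro h
    rw [transferHom_coe]
    exact continuous_XCequiv.comp (h.comp continuous_XCequiv_symm)

end

theorem cascade_exists (T : Set ℕ) (hT0 : 0 ∈ T) (hTadd : ∀ a ∈ T, ∀ b ∈ T, a + b ∈ T) :
    ∃ f : Equiv.Perm (ℤ × I01), ∀ n : ℤ,
      Continuous ⇑(f ^ n) ↔ (0 ≤ n ∧ n.toNat ∈ T) := by
  refine ⟨transferHom (PW hT0), ?_⟩
  intro n
  rw [← map_zpow]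
  rw [transfer_cont]
  exact cascade_char T hT0 hTadd n


end Stmt3

theorem stmt_3 (S : Set ℤ) (h0 : (0 : ℤ) ∈ S)
    (hadd : ∀ a ∈ S, ∀ b ∈ S, a + b ∈ S) :
    ∃ f : Equiv.Perm (ℤ × Set.Ico (0 : ℝ) 1),
      {n : ℤ | Continuous ⇑(f ^ n)} = S := by
  classical
  by_cases hpos : ∀ s ∈ S, 0 ≤ s
  · -- nonnegative case : cascade machine
    obtain ⟨f, hf⟩ := Stmt3.cascade_exists {n : ℕ | (n:ℤ) ∈ S}
      (by simpa using h0)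
      (by
        intro a ha b hb
        simp only [Set.mem_setOf_eq] at ha hb ⊢
        push_cast
        exact hadd _ ha _ hb)
    refine ⟨f, ?_⟩
    ext n
    simp only [Set.mem_setOf_eq, hf n]
    constructor
    · rintro ⟨hn0, hnT⟩
      have hnT' : ((n.toNat : ℕ) : ℤ) ∈ S := hnT
      rwa [Int.toNat_of_nonneg hn0] at hnT'
    · intro hn
      have hn0 := hpos n hn
      refine ⟨hn0, ?_⟩
      show ((n.toNat : ℕ) : ℤ) ∈ S
      rwa [Int.toNat_of_nonneg hn0]
  · by_cases hneg : ∀ s ∈ S, s ≤ 0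
    · -- nonpositive case : inverse cascade machine
      obtain ⟨f, hf⟩ := Stmt3.cascade_exists {n : ℕ | -(n:ℤ) ∈ S}
        (by simpa using h0)
        (by
          intro a ha b hb
          simp only [Set.mem_setOf_eq] at ha hb ⊢
          push_cast
          rw [neg_add]
          exact hadd _ ha _ hb)
      refine ⟨f⁻¹, ?_⟩
      ext n
      simp only [Set.mem_setOf_eq]
      have hin : (f⁻¹)^n = f^(-n) := by
        rw [inv_zpow, ← zpow_neg]
      rw [hin, hf (-n)]
      constructor
      · rintro ⟨h1, h2⟩
        have h2' : -(((-n).toNat : ℕ) : ℤ) ∈ S := h2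
        rw [Int.toNat_of_nonneg h1] at h2'
        simpa using h2'
      · intro hn
        have h1 : n ≤ 0 := hneg n hn
        refine ⟨by omega, ?_⟩
        show -(((-n).toNat : ℕ) : ℤ) ∈ S
        rw [Int.toNat_of_nonneg (by omega : (0:ℤ) ≤ -n)]
        simpa using hn
    · -- mixed case : S is a subgroup, use rotation
      push_neg at hpos hneg
      obtain ⟨a, haS, halt⟩ := hpos
      obtain ⟨t, htS, htpos⟩ := hneg
      have hsmul : ∀ (k : ℕ), ∀ x ∈ S, (k : ℤ) * x ∈ S := by
        intro k
        induction k with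
        | zero =>
            intro x hx
            simpa using h0
        | succ m ih =>
            intro x hx
            have h1 := hadd _ (ih x hx) _ hx
            have h2 : ((m:ℤ)+1) * x = (m:ℤ) * x + x := by ring
            push_cast
            rw [h2]
            exact h1
      have hneg_mem : ∀ s ∈ S, -s ∈ S := by
        intro s hs
        rcases lt_trichotomy s 0 with h | h | h
        · -- s < 0 : -s = (-s) * t + (t - 1) * s
          have k1 : ((( -s).toNat : ℕ) : ℤ) = -s := Int.toNat_of_nonneg (by omega)
          have k2 : (((t - 1).toNat : ℕ) : ℤ) = t - 1 := Int.toNat_of_nonneg (by omega)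
          have m1 : (-s) * t ∈ S := by
            have := hsmul (-s).toNat t htS
            rwa [k1] at this
          have m2 : (t - 1) * s ∈ S := by
            have := hsmul (t - 1).toNat s hs
            rwa [k2] at this
          have := hadd _ m1 _ m2
          have he : (-s) * t + (t - 1) * s = -s := by ring
          rwa [he] at this
        · simp [h, h0]
        · -- s > 0 : -s = s * a + (-a - 1) * s
          have k1 : ((s.toNat : ℕ) : ℤ) = s := Int.toNat_of_nonneg (by omega)
          have k2 : (((-a - 1).toNat : ℕ) : ℤ) = -a - 1 := Int.toNat_of_nonneg (by omega)
          have m1 : s * a ∈ S := by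
            have := hsmul s.toNat a haS
            rwa [k1] at this
          have m2 : (-a - 1) * s ∈ S := by
            have := hsmul (-a - 1).toNat s hs
            rwa [k2] at this
          have := hadd _ m1 _ m2
          have he : s * a + (-a - 1) * s = -s := by ring
          rwa [he] at this
      set H : AddSubgroup ℤ :=
        { carrier := S
          add_mem' := fun hx hy => hadd _ hx _ hy
          zero_mem' := h0
          neg_mem' := fun hx => hneg_mem _ hx } with hH
      obtain ⟨g, hg⟩ := Int.subgroup_cyclic H
      have hmemH : ∀ n : ℤ, n ∈ S ↔ g ∣ n := by
        intro n
        have h1 : n ∈ S ↔ n ∈ H := Iff.rfl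
        rw [h1, hg, AddSubgroup.mem_closure_singleton]
        constructor
        · rintro ⟨k, hk⟩
          exact ⟨k, by rw [← hk]; rw [smul_eq_mul]; ring⟩
        · rintro ⟨k, hk⟩
          exact ⟨k, by rw [smul_eq_mul, hk]; ring⟩
      have hgne : g ≠ 0 := by
        intro hg0
        have := (hmemH t).mp htS
        rw [hg0] at this
        simp at this
        omega
      refine ⟨Stmt3.RotP (1/(g:ℝ)), ?_⟩
      ext n
      simp only [Set.mem_setOf_eq]
      rw [Stmt3.rot_exists g hgne n]
      exact (hmemH n).symm
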